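/- Let (W,S) be a Coxeter system in which every conjugacy class satisfies the Red-Min property (for each w not of minimal length in its class, there is w' with w ≈ w' and s ∈ S with ℓ(s w' s) < ℓ(w')), where ≈ denotes equality-length chains of conjugations by simple reflections. Then in the generic Hecke algebra ℋ, the image of T_w in the cocenter ℋ/[ℋ,ℋ] lies in the Λ-span of the images of T_x for x of minimal length in their conjugacy classes. -/

import Mathlib

open CoxeterSystem

variable {B : Type*} {W : Type*} [Group W] {M : CoxeterMatrix B}

open List

namespace CocenterAux

section GroupLemmas

variable {G : Type*} [Group G] {a b : G}

lemma flip_pow (k : ℕ) : (a * b) ^ k * a = a * (b * a) ^ k := by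
  induction k with
  | zero => simp
  | succ k ih =>
    rw [pow_succ' (a*b), pow_succ' (b*a), mul_assoc (a*b), ih]
    simp [mul_assoc]

lemma conj_pow_aux (k : ℕ) : (a * b * a) * (b * a) ^ k = (a * b) ^ k * (a * b * a) := by
  induction k with
  | zero => simp
  | succ k ih =>
    calc (a*b*a) * (b*a)^(k+1) = ((a*b*a) * (b*a)^k) * (b*a) := by
          rw [pow_succ (b*a)]; simp [mul_assoc]
    _ = ((a*b)^k * (a*b*a)) * (b*a) := by rw [ih]
    _ = (a*b)^k * ((a*b) * (a*b*a)) := by simp [mul_assoc]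
    _ = (a*b)^(k+1) * (a*b*a) := by rw [pow_succ (a*b)]; simp [mul_assoc]

lemma pow_mul_pow_inv (ha : a * a = 1) (hb : b * b = 1) (k : ℕ) :
    (a * b) ^ k * (b * a) ^ k = 1 := by
  induction k with
  | zero => simp
  | succ k ih =>
    have hmid : (a*b) * (b*a) = 1 := by
      calc (a*b) * (b*a) = a * (b*b) * a := by simp [mul_assoc]
      _ = 1 := by rw [hb, mul_one, ha]
    calc (a*b)^(k+1) * (b*a)^(k+1)
        = (a*b)^k * (((a*b) * (b*a)) * (b*a)^k) := by
          rw [pow_succ (a*b), pow_succ' (b*a)]; simp [mul_assoc]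
    _ = (a*b)^k * (b*a)^k := by rw [hmid, one_mul]
    _ = 1 := ih

lemma conj_eq_iff {x y z t : G} (hxy : x * y = 1) (hyx : y * x = 1) :
    x * t * y = z ↔ t = y * z * x := by
  constructor
  · rintro rfl
    refine (?_ : y * (x * t * y) * x = t).symm
    calc y * (x * t * y) * x = (y * x) * (t * (y * x)) := by simp [mul_assoc]
    _ = t := by rw [hyx]; simp
  · rintro rfl
    calc x * (y * z * x) * y = (x * y) * (z * (x * y)) := by simp [mul_assoc]
    _ = z := by rw [hxy]; simp

end GroupLemmas

open Classical in
/-- Sign: `-1` if the two elements are equal, `1` otherwise. -/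
noncomputable def sgn (t u : W) : ℤˣ := if t = u then -1 else 1

omit [Group W] in
lemma sgn_eq_neg_one {t u : W} (h : t = u) : sgn t u = -1 := if_pos h

omit [Group W] in
lemma sgn_eq_one {t u : W} (h : t ≠ u) : sgn t u = 1 := if_neg h

omit [Group W] in
lemma sgn_congr {t u t' u' : W} (h : (t = u) ↔ (t' = u')) : sgn t u = sgn t' u' := by
  by_cases hh : t = u
  · rw [sgn_eq_neg_one hh, sgn_eq_neg_one (h.mp hh)]
  · rw [sgn_eq_one hh, sgn_eq_one (fun hx => hh (h.mpr hx))]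

/-- The classical permutation-representation generator on `W × ℤˣ`. -/
noncomputable def permAux (cs : CoxeterSystem M W) (i : B) : Function.End (W × ℤˣ) :=
  fun x => (cs.simple i * x.1 * cs.simple i, sgn x.1 (cs.simple i) * x.2)

variable (cs : CoxeterSystem M W)

lemma permAux_apply (i : B) (t : W) (ε : ℤˣ) :
    permAux cs i (t, ε) = (cs.simple i * t * cs.simple i, sgn t (cs.simple i) * ε) := rfl

lemma permAux_pow_formula (i j : B) (k : ℕ) (t : W) (ε : ℤˣ) :
    ((permAux cs i * permAux cs j) ^ k) (t, ε) =
      ((cs.simple i * cs.simple j) ^ k * t * (cs.simple j * cs.simple i) ^ k,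
        ε * ∏ r ∈ Finset.range (2 * k),
          sgn t ((cs.simple j * cs.simple i) ^ r * cs.simple j)) := by
  set a := cs.simple j with ha
  set b := cs.simple i with hb
  have haa : a * a = 1 := cs.simple_mul_simple_self j
  have hbb : b * b = 1 := cs.simple_mul_simple_self i
  induction k with
  | zero => simp [Function.End.one_def]
  | succ k ih =>
    have h1 : (b*a)^k * (a*b)^k = 1 := pow_mul_pow_inv hbb haa k
    have h2 : (a*b)^k * (b*a)^k = 1 := pow_mul_pow_inv haa hbb k
    rw [pow_succ' (permAux cs i * permAux cs j)]
    rw [show ((permAux cs i * permAux cs j) * ((permAux cs i * permAux cs j) ^ k)) (t, ε)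
        = (permAux cs i) ((permAux cs j) (((permAux cs i * permAux cs j) ^ k) (t, ε))) from rfl,
      ih, permAux_apply, permAux_apply]
    have e1 : (a*b)^k * a * (b*a)^k = (a*b)^(2*k) * a := by
      calc (a*b)^k * a * (b*a)^k = (a*b)^k * ((a*b)^k * a) := by rw [mul_assoc, ← flip_pow k]
      _ = (a*b)^(2*k) * a := by rw [two_mul, pow_add, mul_assoc]
    have c1 : ((b*a)^k * t * (a*b)^k = a) ↔ (t = (a*b)^(2*k) * a) := by
      rw [conj_eq_iff h1 h2, e1]
    have e2 : (a*b)^k * (a*b*a) * (b*a)^k = (a*b)^(2*k+1) * a := by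
      calc (a*b)^k * (a*b*a) * (b*a)^k = (a*b)^k * ((a*b)^k * (a*b*a)) := by
            rw [mul_assoc, conj_pow_aux k]
      _ = (a*b)^(2*k+1) * a := by rw [pow_succ, two_mul, pow_add]; simp [mul_assoc]
    have c2 : (a * ((b*a)^k * t * (a*b)^k) * a = b) ↔ (t = (a*b)^(2*k+1) * a) := by
      rw [conj_eq_iff haa haa, conj_eq_iff h1 h2, e2]
    congr 1
    · rw [pow_succ' (b*a), pow_succ (a*b)]
      simp [mul_assoc, ha, hb]
    · rw [sgn_congr c2, sgn_congr c1,
        show 2*(k+1) = (2*k) + 1 + 1 by ring, Finset.prod_range_succ, Finset.prod_range_succ]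
      simp [mul_assoc, mul_comm, mul_left_comm]

lemma permAux_liftable : M.IsLiftable (permAux cs) := by
  intro i j
  funext x
  obtain ⟨t, ε⟩ := x
  rw [permAux_pow_formula cs i j (M i j) t ε]
  have hb : (cs.simple i * cs.simple j) ^ (M i j) = 1 := cs.simple_mul_simple_pow i j
  have ha : (cs.simple j * cs.simple i) ^ (M i j) = 1 := cs.simple_mul_simple_pow' i j
  have hprod : (∏ r ∈ Finset.range (2 * (M i j)),
      sgn t ((cs.simple j * cs.simple i) ^ r * cs.simple j)) = 1 := by
    rw [two_mul, Finset.prod_range_add]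
    simp only [pow_add, ha, one_mul]
    exact Int.units_mul_self _
  rw [hb, ha, hprod, one_mul, mul_one, mul_one]
  rfl

/-- The sign representation `W →* Function.End (W × ℤˣ)`. -/
noncomputable def phi : W →* Function.End (W × ℤˣ) :=
  cs.lift ⟨permAux cs, permAux_liftable cs⟩

lemma phi_simple (i : B) : phi cs (cs.simple i) = permAux cs i :=
  cs.lift_apply_simple _ i

lemma ris_cons (i : B) (ω : List B) :
    cs.rightInvSeq (i :: ω) =
      ((cs.wordProd ω)⁻¹ * cs.simple i * cs.wordProd ω) :: cs.rightInvSeq ω := rfl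

lemma phi_wordProd (ω : List B) (t : W) (ε : ℤˣ) :
    phi cs (cs.wordProd ω) (t, ε) =
      (cs.wordProd ω * t * (cs.wordProd ω)⁻¹,
        ε * ∏ j ∈ Finset.range ω.length, sgn t ((cs.rightInvSeq ω).getD j 1)) := by
  induction ω generalizing t ε with
  | nil => simp [wordProd_nil, Function.End.one_def]
  | cons i ω ih =>
    have h1 : phi cs (cs.wordProd (i :: ω)) (t, ε)
        = permAux cs i (phi cs (cs.wordProd ω) (t, ε)) := by
      rw [wordProd_cons, map_mul, phi_simple]; rfl
    rw [h1, ih, permAux_apply]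
    congr 1
    · rw [wordProd_cons, mul_inv_rev, cs.inv_simple]
      simp [mul_assoc]
    · have hcond : (cs.wordProd ω * t * (cs.wordProd ω)⁻¹ = cs.simple i)
          ↔ (t = (cs.wordProd ω)⁻¹ * cs.simple i * cs.wordProd ω) := by
        rw [conj_eq_iff (mul_inv_cancel _) (inv_mul_cancel _)]
      rw [sgn_congr hcond, ris_cons, length_cons, Finset.prod_range_succ']
      simp only [List.getD_cons_succ, List.getD_cons_zero]
      simp [mul_assoc, mul_comm, mul_left_comm]

end CocenterAux

namespace CocenterAux2
open CocenterAux

variable (cs : CoxeterSystem M W)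

lemma sign_eq_one_of_not_mem (ω : List B) (t : W) (ht : t ∉ cs.rightInvSeq ω) :
    (phi cs (cs.wordProd ω) (t, 1)).2 = 1 := by
  rw [phi_wordProd]
  have : ∀ j ∈ Finset.range ω.length, sgn t ((cs.rightInvSeq ω).getD j 1) = 1 := by
    intro j hj
    rw [Finset.mem_range] at hj
    have hj' : j < (cs.rightInvSeq ω).length := by rw [cs.length_rightInvSeq]; exact hj
    refine sgn_eq_one (fun h => ht ?_)
    rw [h, List.getD_eq_getElem _ _ hj']
    exact List.getElem_mem _
  rw [Finset.prod_congr rfl this]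
  simp

lemma sign_eq_neg_one_of_mem {ω : List B} (hω : cs.IsReduced ω) {t : W}
    (ht : t ∈ cs.rightInvSeq ω) :
    (phi cs (cs.wordProd ω) (t, 1)).2 = -1 := by
  rw [phi_wordProd]
  obtain ⟨j₀, hj₀, hget⟩ := List.mem_iff_getElem.mp ht
  have hlen : (cs.rightInvSeq ω).length = ω.length := cs.length_rightInvSeq ω
  have hnd : (cs.rightInvSeq ω).Nodup := hω.nodup_rightInvSeq
  have : (∏ j ∈ Finset.range ω.length, sgn t ((cs.rightInvSeq ω).getD j 1)) = -1 := by
    rw [Finset.prod_eq_single j₀]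
    · rw [List.getD_eq_getElem _ _ hj₀, hget]
      exact sgn_eq_neg_one rfl
    · intro j hj hne
      rw [Finset.mem_range] at hj
      have hj' : j < (cs.rightInvSeq ω).length := by rw [hlen]; exact hj
      rw [List.getD_eq_getElem _ _ hj']
      refine sgn_eq_one (fun h => hne ?_)
      rw [← hget] at h
      exact (hnd.getElem_inj_iff.mp h).symm
    · intro hj₀'
      exfalso
      exact hj₀' (Finset.mem_range.mpr (by rw [← hlen]; exact hj₀))
  rw [this]
  simp

/-- Exchange property for simple reflections: if `ℓ(w sᵢ) < ℓ(w)` then `sᵢ` belongs to the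
right inversion sequence of every reduced word for `w`. -/
lemma simple_mem_rightInvSeq_of_descent {w : W} {i : B}
    (hlt : cs.length (w * cs.simple i) < cs.length w)
    {ω : List B} (hω : cs.IsReduced ω) (hπ : cs.wordProd ω = w) :
    cs.simple i ∈ cs.rightInvSeq ω := by
  obtain ⟨ω', hω', hπ'⟩ := cs.exists_reduced_word' (w * cs.simple i)
  have hlen' : cs.length (w * cs.simple i) + 1 = cs.length w := by
    rcases cs.length_mul_simple w i with h | h
    · omega
    · exact h
  -- ω'.concat i is a reduced word for w
  have hπ'' : cs.wordProd (ω'.concat i) = w := by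
    rw [wordProd_concat, ← hπ', mul_assoc, cs.simple_mul_simple_self, mul_one]
  have hred'' : cs.IsReduced (ω'.concat i) := by
    unfold CoxeterSystem.IsReduced
    rw [hπ'', List.length_concat, ← hω', ← hπ']
    omega
  have hmem : cs.simple i ∈ cs.rightInvSeq (ω'.concat i) := by
    rw [cs.rightInvSeq_concat]
    simp
  -- the sign of (w, sᵢ) is -1
  have hsign : (phi cs w (cs.simple i, 1)).2 = -1 := by
    rw [← hπ'']
    exact sign_eq_neg_one_of_mem cs hred'' hmem
  by_contra hnot
  have := sign_eq_one_of_not_mem cs ω (cs.simple i) hnot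
  rw [hπ] at this
  rw [this] at hsign
  exact absurd hsign (by decide)

/-- Key lemma: if `ℓ(sᵢw) = ℓ(wsᵢ) = ℓ(w) + 1` and `ℓ(sᵢwsᵢ) = ℓ(w)`, then `sᵢw = wsᵢ`. -/
lemma simple_comm_of_lengths {w : W} {i : B}
    (h1 : cs.length (cs.simple i * w) = cs.length w + 1)
    (h2 : cs.length (w * cs.simple i) = cs.length w + 1)
    (h3 : cs.length (cs.simple i * w * cs.simple i) = cs.length w) :
    cs.simple i * w = w * cs.simple i := by
  obtain ⟨ω, hω, hπ⟩ := cs.exists_reduced_word' w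
  -- i :: ω is a reduced word for sᵢ w
  have hπ1 : cs.wordProd (i :: ω) = cs.simple i * w := by rw [wordProd_cons, hπ]
  have hlw : cs.length w = ω.length := by rw [hπ]; exact hω
  have hred1 : cs.IsReduced (i :: ω) := by
    unfold CoxeterSystem.IsReduced
    rw [hπ1, List.length_cons, h1, hlw]
  have hdesc : cs.length ((cs.simple i * w) * cs.simple i) < cs.length (cs.simple i * w) := by
    rw [h1, h3]
    omega
  have hmem := simple_mem_rightInvSeq_of_descent cs hdesc hred1 hπ1
  rw [ris_cons] at hmem
  rcases List.mem_cons.mp hmem with h | h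
  · -- sᵢ = (π ω)⁻¹ sᵢ (π ω), i.e. they commute
    rw [← hπ] at h
    calc cs.simple i * w = w * (w⁻¹ * cs.simple i * w) := by simp [mul_assoc]
    _ = w * cs.simple i := by rw [← h]
  · exfalso
    have := cs.isRightInversion_of_mem_rightInvSeq hω h
    rw [← hπ] at this
    have hlt := this.2
    omega

end CocenterAux2

/-- One length-preserving conjugation step by a simple reflection: `w ↦ s w s` with
`ℓ(s w s) = ℓ(w)`. -/
def ApproxStep (cs : CoxeterSystem M W) (w w' : W) : Prop :=
  ∃ i : B, w' = cs.simple i * w * cs.simple i ∧ cs.length w' = cs.length w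

/-- The relation `≈`: a chain of length-preserving conjugations by simple reflections. -/
def Approx (cs : CoxeterSystem M W) : W → W → Prop :=
  Relation.ReflTransGen (ApproxStep cs)

/-- `w` has minimal length in its conjugacy class. -/
def IsMinInClass (cs : CoxeterSystem M W) (w : W) : Prop :=
  ∀ v : W, IsConj w v → cs.length w ≤ cs.length v

/-- Suppose every conjugacy class of `(W,S)` satisfies the Red-Min property:
for each `w` not of minimal length in its class there are `w' ≈ w` and a simple reflection
`s` with `ℓ(s w' s) < ℓ(w')`. Then in the generic Hecke algebra `ℋ`, the image of every
`T_w` in the cocenter `ℋ/[ℋ,ℋ]` lies in the `Λ`-span of the images of the `T_x` for `x`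
of minimal length in its conjugacy class; i.e., `T_w` lies in the `Λ`-span of the
commutators together with these `T_x`. -/
theorem Tw_in_span_of_minimal (cs : CoxeterSystem M W)
    (hRM : ∀ w : W, ¬ IsMinInClass cs w → ∃ w' : W, ∃ i : B, Approx cs w w' ∧
      cs.length (cs.simple i * w' * cs.simple i) < cs.length w')
    (Λ : Type*) [CommRing Λ] (c : B → Λ)
    (hc : ∀ i i' : B, IsConj (cs.simple i) (cs.simple i') → c i = c i')
    (H : Type*) [Ring H] [Algebra Λ H] (T : W → H)
    (hT1 : T 1 = 1)
    (hmul : ∀ w w' : W, cs.length (w * w') = cs.length w + cs.length w' →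
      T (w * w') = T w * T w')
    (hquad : ∀ i : B, (T (cs.simple i) + 1) *
      (T (cs.simple i) - algebraMap Λ H (c i)) = 0)
    (w : W) :
    T w ∈ Submodule.span Λ
      ({x : H | ∃ a b : H, x = a * b - b * a} ∪
        {h : H | ∃ x : W, IsMinInClass cs x ∧ h = T x}) := by
  set Sp := Submodule.span Λ
      ({x : H | ∃ a b : H, x = a * b - b * a} ∪
        {h : H | ∃ x : W, IsMinInClass cs x ∧ h = T x}) with hSp
  have hcomm : ∀ a b : H, a * b - b * a ∈ Sp := fun a b =>
    Submodule.subset_span (Or.inl ⟨a, b, rfl⟩)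
  have hmin' : ∀ x : W, IsMinInClass cs x → T x ∈ Sp := fun x hx =>
    Submodule.subset_span (Or.inr ⟨x, hx, rfl⟩)
  -- multiplication with a simple reflection, as long as lengths add
  have hTleft : ∀ (i : B) (u : W), cs.length (cs.simple i * u) = cs.length u + 1 →
      T (cs.simple i * u) = T (cs.simple i) * T u := by
    intro i u h
    exact hmul _ _ (by rw [h, cs.length_simple]; omega)
  have hTright : ∀ (i : B) (u : W), cs.length (u * cs.simple i) = cs.length u + 1 →
      T (u * cs.simple i) = T u * T (cs.simple i) := by
    intro i u h
    exact hmul _ _ (by rw [h, cs.length_simple])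
  -- one approximation step moves T by a commutator
  have SA : ∀ u u' : W, ApproxStep cs u u' → T u' - T u ∈ Sp := by
    rintro u u' ⟨i, rfl, hlen⟩
    rcases cs.length_simple_mul u i with h1 | h1
    · rcases cs.length_mul_simple u i with h2 | h2
      · -- both ascents: sᵢ and u commute
        have hcm := CocenterAux2.simple_comm_of_lengths cs h1 h2 hlen
        have : cs.simple i * u * cs.simple i = u := by
          rw [hcm, mul_assoc, cs.simple_mul_simple_self, mul_one]
        rw [this, sub_self]
        exact Sp.zero_mem
      · -- right descent: commutator
        have husu : cs.length (u * cs.simple i) + 1 = cs.length u := h2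
        have e1 : T u = T (u * cs.simple i) * T (cs.simple i) := by
          have : T ((u * cs.simple i) * cs.simple i) = T (u * cs.simple i) * T (cs.simple i) :=
            hTright i (u * cs.simple i) (by
              rw [mul_assoc, cs.simple_mul_simple_self, mul_one]; omega)
          rwa [mul_assoc, cs.simple_mul_simple_self, mul_one] at this
        have e2 : T (cs.simple i * u * cs.simple i)
            = T (cs.simple i) * T (u * cs.simple i) := by
          have : T (cs.simple i * (u * cs.simple i))
              = T (cs.simple i) * T (u * cs.simple i) :=
            hTleft i (u * cs.simple i) (by rw [← mul_assoc]; omega)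
          rwa [← mul_assoc] at this
        rw [e1, e2]
        exact hcomm _ _
    · rcases cs.length_mul_simple u i with h2 | h2
      · -- left descent, right ascent: commutator
        have e1 : T u = T (cs.simple i) * T (cs.simple i * u) := by
          have : T (cs.simple i * (cs.simple i * u))
              = T (cs.simple i) * T (cs.simple i * u) :=
            hTleft i (cs.simple i * u) (by
              rw [← mul_assoc, cs.simple_mul_simple_self, one_mul]; omega)
          rwa [← mul_assoc, cs.simple_mul_simple_self, one_mul] at this
        have e2 : T (cs.simple i * u * cs.simple i)
            = T (cs.simple i * u) * T (cs.simple i) := by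
          exact hTright i (cs.simple i * u) (by omega)
        rw [e1, e2]
        exact hcomm _ _
      · -- both descents: sᵢ and (sᵢ u) commute, so sᵢ u sᵢ = u
        have hx1 : cs.length (cs.simple i * (cs.simple i * u))
            = cs.length (cs.simple i * u) + 1 := by
          rw [← mul_assoc, cs.simple_mul_simple_self, one_mul]; omega
        have hx2 : cs.length ((cs.simple i * u) * cs.simple i)
            = cs.length (cs.simple i * u) + 1 := by
          have : cs.simple i * u * cs.simple i = (cs.simple i * u) * cs.simple i := rfl
          omega
        have hx3 : cs.length (cs.simple i * (cs.simple i * u) * cs.simple i)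
            = cs.length (cs.simple i * u) := by
          rw [← mul_assoc, cs.simple_mul_simple_self, one_mul]; omega
        have hcm := CocenterAux2.simple_comm_of_lengths cs hx1 hx2 hx3
        -- hcm : sᵢ * (sᵢ u) = (sᵢ u) * sᵢ, i.e. u = sᵢ u sᵢ
        have : cs.simple i * u * cs.simple i = u := by
          rw [← hcm, ← mul_assoc, cs.simple_mul_simple_self, one_mul]
        rw [this, sub_self]
        exact Sp.zero_mem
  -- a chain of approximation steps
  have chain : ∀ u u' : W, Approx cs u u' →
      (T u' - T u ∈ Sp ∧ cs.length u' = cs.length u) := by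
    intro u u' h
    induction h with
    | refl => exact ⟨by simp, rfl⟩
    | tail hab hbc ih =>
      have hstep := SA _ _ hbc
      obtain ⟨i, _, hl⟩ := hbc
      constructor
      · have := Sp.add_mem hstep ih.1
        simpa using this
      · rw [hl, ih.2]
  -- main induction on length
  have key : ∀ n : ℕ, ∀ u : W, cs.length u ≤ n → T u ∈ Sp := by
    intro n
    induction n with
    | zero =>
      intro u hu
      have hu1 : u = 1 := cs.length_eq_zero_iff.mp (Nat.le_zero.mp hu)
      subst hu1
      refine hmin' 1 (fun v hv => ?_)
      simp [cs.length_one]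
    | succ n ih =>
      intro u hu
      by_cases hm : IsMinInClass cs u
      · exact hmin' u hm
      obtain ⟨u', i, happ, hdesc⟩ := hRM u hm
      obtain ⟨hdiff, hlen⟩ := chain u u' happ
      -- length bookkeeping
      have h1 : cs.length (cs.simple i * u') + 1 = cs.length u' := by
        rcases cs.length_simple_mul u' i with h | h
        · exfalso
          rcases cs.length_mul_simple (cs.simple i * u') i with h' | h' <;> omega
        · exact h
      have h3 : cs.length (cs.simple i * u' * cs.simple i) + 2 = cs.length u' := by
        rcases cs.length_mul_simple (cs.simple i * u') i with h' | h' <;> omega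
      set v := cs.simple i * u' * cs.simple i with hv
      have hvs : v * cs.simple i = cs.simple i * u' := by
        rw [hv, mul_assoc, cs.simple_mul_simple_self, mul_one]
      have hsvs : cs.simple i * (v * cs.simple i) = u' := by
        rw [hvs, ← mul_assoc, cs.simple_mul_simple_self, one_mul]
      have hlvs : cs.length (v * cs.simple i) = cs.length v + 1 := by
        rw [hvs]; omega
      have eT1 : T (v * cs.simple i) = T v * T (cs.simple i) := hTright i v hlvs
      have eT2 : T u' = T (cs.simple i) * T (v * cs.simple i) := by
        rw [← hsvs]
        exact hTleft i (v * cs.simple i) (by rw [hsvs]; omega)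
      set C := algebraMap Λ H (c i) with hC
      have hq : T (cs.simple i) * T (cs.simple i)
          = T (cs.simple i) * C + C - T (cs.simple i) := by
        rw [← sub_eq_zero, show T (cs.simple i) * T (cs.simple i)
            - (T (cs.simple i) * C + C - T (cs.simple i))
          = (T (cs.simple i) + 1) * (T (cs.simple i) - C) by noncomm_ring, hquad i]
      have hCmul : ∀ x : H, x * C = c i • x := by
        intro x
        rw [Algebra.smul_def, ← Algebra.commutes]
      -- T u' = commutator + c i • T(v sᵢ) + c i • T v - T(v sᵢ)
      have hmemvs : T (v * cs.simple i) ∈ Sp := by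
        refine ih (v * cs.simple i) ?_
        omega
      have hmemv : T v ∈ Sp := by
        refine ih v ?_
        omega
      have hcm : T u' - T (v * cs.simple i) * T (cs.simple i) ∈ Sp := by
        have : T u' - T (v * cs.simple i) * T (cs.simple i)
            = T (cs.simple i) * T (v * cs.simple i)
              - T (v * cs.simple i) * T (cs.simple i) := by rw [eT2]
        rw [this]
        exact hcomm _ _
      have hrw : T (v * cs.simple i) * T (cs.simple i)
          = c i • T (v * cs.simple i) + c i • T v - T (v * cs.simple i) := by
        calc T (v * cs.simple i) * T (cs.simple i)
            = T v * (T (cs.simple i) * T (cs.simple i)) := by rw [eT1, mul_assoc]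
        _ = T v * (T (cs.simple i) * C) + T v * C - T v * T (cs.simple i) := by
              rw [hq]; noncomm_ring
        _ = (T v * T (cs.simple i)) * C + T v * C - T v * T (cs.simple i) := by
              rw [mul_assoc]
        _ = c i • (T v * T (cs.simple i)) + c i • T v - T v * T (cs.simple i) := by
              rw [hCmul, hCmul]
        _ = c i • T (v * cs.simple i) + c i • T v - T (v * cs.simple i) := by rw [← eT1]
      have hTu' : T u' ∈ Sp := by
        have : T u' = (T u' - T (v * cs.simple i) * T (cs.simple i))
            + (c i • T (v * cs.simple i) + c i • T v - T (v * cs.simple i)) := by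
          rw [← hrw]; abel
        rw [this]
        exact Sp.add_mem hcm (Sp.sub_mem
          (Sp.add_mem (Sp.smul_mem _ hmemvs) (Sp.smul_mem _ hmemv)) hmemvs)
      have : T u = T u' - (T u' - T u) := by abel
      rw [this]
      exact Sp.sub_mem hTu' hdiff
  exact key (cs.length w) w le_rfl
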